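/- Let D be a locally nilpotent ℂ-derivation of ℂ[X_1, …, X_n] and let d := min{m ∈ ℕ : D^[m](X_i) = 0 for all i = 1, …, n}. If p ∈ ℂ[T] is a nonzero polynomial of degree strictly less than d, then there exists j ∈ {1, …, n} such that Σ_{m=0}^{deg p} (coeff of T^m in p) · exp(mD)(X_j) ≠ 0. (Equivalently, no nonzero polynomial of degree < d annihilates the automorphism F = (exp(D)(X_1), …, exp(D)(X_n)).) -/

import Mathlib

open Classical in
/-- The exponential `exp(D)(a) = Σ_{i=0}^{∞} (1/i!) • D^[i](a)` of a derivation `D`;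
for each `a` on which `D` is eventually nilpotent this is the (finite) sum of all
possibly nonzero terms. -/
noncomputable def expMap (k : Type*) {A : Type*} [Field k] [CharZero k] [CommRing A]
    [Algebra k A] (D : Derivation k A A) (a : A) : A :=
  if h : ∃ n : ℕ, (⇑D)^[n] a = 0 then
    ∑ i ∈ Finset.range (Nat.find h), ((Nat.factorial i : k)⁻¹) • (⇑D)^[i] a
  else a

open Classical in
lemma expMap_eq_sum (k : Type*) {A : Type*} [Field k] [CharZero k] [CommRing A]
    [Algebra k A] (D : Derivation k A A) (a : A) (N : ℕ) (hN : (⇑D)^[N] a = 0) :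
    expMap k D a = ∑ i ∈ Finset.range N, ((Nat.factorial i : k)⁻¹) • (⇑D)^[i] a := by
  have h : ∃ n : ℕ, (⇑D)^[n] a = 0 := ⟨N, hN⟩
  rw [expMap, dif_pos h]
  refine Finset.sum_subset (Finset.range_subset_range.mpr (Nat.find_le hN)) ?_
  intro i _ hi
  have hfind : Nat.find h ≤ i := le_of_not_gt fun hl => hi (Finset.mem_range.mpr hl)
  have hz : (⇑D)^[i] a = 0 := by
    calc (⇑D)^[i] a = (⇑D)^[i - Nat.find h] ((⇑D)^[Nat.find h] a) := by
          rw [← Function.iterate_add_apply, Nat.sub_add_cancel hfind]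
      _ = 0 := by rw [Nat.find_spec h]; exact Function.iterate_fixed (map_zero D) _
  rw [hz, smul_zero]

lemma iterate_nsmul_deriv {A : Type*} [CommRing A] [Algebra ℂ A]
    (D : Derivation ℂ A A) (m i : ℕ) (a : A) :
    (⇑(m • D))^[i] a = ((m : ℂ)) ^ i • (⇑D)^[i] a := by
  induction i with
  | zero => simp
  | succ i ih =>
    rw [Function.iterate_succ_apply', Function.iterate_succ_apply', ih]
    have h1 : ∀ x : A, (m • D) x = (m : ℂ) • D x := fun x => by
      simp [Nat.cast_smul_eq_nsmul]
    rw [h1, Derivation.map_smul, smul_smul, ← pow_succ']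

open MvPolynomial in
/-- Main theorem, second half: if `D` is a locally nilpotent derivation of
`ℂ[X_1,…,X_n]` and `d` is the least `m` with `D^[m](X_i) = 0` for all `i`, then no
nonzero polynomial `p ∈ ℂ[T]` of degree `< d` annihilates the exponential
automorphism `F` (whose iterates satisfy `(F^[m])_j = exp(mD)(X_j)`). -/
theorem exp_automorphism_minimal_degree
    (n : ℕ) (D : Derivation ℂ (MvPolynomial (Fin n) ℂ) (MvPolynomial (Fin n) ℂ))
    (hD : ∀ a : MvPolynomial (Fin n) ℂ, ∃ m : ℕ, (⇑D)^[m] a = 0)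
    (d : ℕ) (hd : ∀ i : Fin n, (⇑D)^[d] (X i) = 0)
    (hmin : ∀ m : ℕ, (∀ i : Fin n, (⇑D)^[m] (X i) = 0) → d ≤ m)
    (p : Polynomial ℂ) (hp : p ≠ 0) (hdeg : p.natDegree < d) :
    ∃ j : Fin n,
      ∑ m ∈ Finset.range (p.natDegree + 1),
        p.coeff m • expMap ℂ (m • D) (X j) ≠ 0 := by
  by_contra hcon
  push_neg at hcon
  set N := p.natDegree with hNdef
  -- the key coefficients
  set c : ℕ → ℂ := fun i => ∑ m ∈ Finset.range (N + 1), p.coeff m * (m : ℂ) ^ i with hc_def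
  have hcval : ∀ i, c i = ∑ m ∈ Finset.range (N + 1), p.coeff m * (m : ℂ) ^ i :=
    fun i => rfl
  have hd1 : 1 ≤ d := lt_of_le_of_lt (Nat.zero_le _) hdeg
  -- iterates of length ≥ d kill the variables
  have hDd : ∀ (j : Fin n) (i : ℕ), d ≤ i → (⇑D)^[i] (X j) = 0 := by
    intro j i hi
    have h1 : i = (i - d) + d := (Nat.sub_add_cancel hi).symm
    rw [h1, Function.iterate_add_apply, hd j]
    exact Function.iterate_fixed (map_zero D) _
  -- evaluate expMap
  have hexp : ∀ (m : ℕ) (j : Fin n),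
      expMap ℂ (m • D) (X j)
        = ∑ i ∈ Finset.range d, (((Nat.factorial i : ℂ))⁻¹ * (m : ℂ) ^ i) • (⇑D)^[i] (X j) := by
    intro m j
    rw [expMap_eq_sum ℂ (m • D) (X j) d
      (by rw [iterate_nsmul_deriv, hd j, smul_zero])]
    exact Finset.sum_congr rfl fun i _ => by
      rw [iterate_nsmul_deriv, smul_smul]
  -- the hypothesis in terms of the coefficients c
  have hsum : ∀ j : Fin n,
      ∑ i ∈ Finset.range d, (((Nat.factorial i : ℂ))⁻¹ * c i) • (⇑D)^[i] (X j) = 0 := by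
    intro j
    calc ∑ i ∈ Finset.range d, (((Nat.factorial i : ℂ))⁻¹ * c i) • (⇑D)^[i] (X j)
        = ∑ i ∈ Finset.range d, ∑ m ∈ Finset.range (N + 1),
            (p.coeff m * (((Nat.factorial i : ℂ))⁻¹ * (m : ℂ) ^ i)) • (⇑D)^[i] (X j) := by
          refine Finset.sum_congr rfl fun i _ => ?_
          rw [show ((Nat.factorial i : ℂ))⁻¹ * c i
              = ∑ m ∈ Finset.range (N + 1),
                  p.coeff m * (((Nat.factorial i : ℂ))⁻¹ * (m : ℂ) ^ i) by
            rw [hcval, Finset.mul_sum]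
            exact Finset.sum_congr rfl fun m _ => by ring]
          rw [Finset.sum_smul]
      _ = ∑ m ∈ Finset.range (N + 1), ∑ i ∈ Finset.range d,
            (p.coeff m * (((Nat.factorial i : ℂ))⁻¹ * (m : ℂ) ^ i)) • (⇑D)^[i] (X j) :=
          Finset.sum_comm
      _ = ∑ m ∈ Finset.range (N + 1), p.coeff m • expMap ℂ (m • D) (X j) := by
          refine Finset.sum_congr rfl fun m _ => ?_
          rw [hexp m j, Finset.smul_sum]
          exact Finset.sum_congr rfl fun i _ => by rw [smul_smul]
      _ = 0 := hcon j
  -- a variable not killed by D^[d-1]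
  have hj0 : ∃ j0 : Fin n, (⇑D)^[d - 1] (X j0) ≠ 0 := by
    by_contra h
    push_neg at h
    have := hmin (d - 1) h
    omega
  obtain ⟨j0, hj0⟩ := hj0
  -- all coefficients c k, k < d, vanish
  have hc : ∀ k, k < d → c k = 0 := by
    intro k
    induction k using Nat.strong_induction_on with
    | _ k ih =>
      intro hk
      set t := d - 1 - k with ht
      have happ : ∑ i ∈ Finset.range d,
          (((Nat.factorial i : ℂ))⁻¹ * c i) • (⇑D)^[i + t] (X j0) = 0 := by
        have key : ∀ i, (((Nat.factorial i : ℂ))⁻¹ * c i) • (⇑D)^[i + t] (X j0)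
            = ((D : MvPolynomial (Fin n) ℂ →ₗ[ℂ] MvPolynomial (Fin n) ℂ) ^ t)
                ((((Nat.factorial i : ℂ))⁻¹ * c i) • (⇑D)^[i] (X j0)) := by
          intro i
          rw [map_smul, Module.End.pow_apply, Derivation.coeFn_coe,
            ← Function.iterate_add_apply, Nat.add_comm]
        rw [Finset.sum_congr rfl fun i _ => key i, ← map_sum, hsum j0, map_zero]
      rw [Finset.sum_eq_single_of_mem k (Finset.mem_range.mpr hk) ?side] at happ
      · have hkd : k + t = d - 1 := by omega
        rw [hkd] at happ
        rcases smul_eq_zero.mp happ with h | h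
        · rcases mul_eq_zero.mp h with h' | h'
          · exact absurd h' (inv_ne_zero (Nat.cast_ne_zero.mpr (Nat.factorial_ne_zero k)))
          · exact h'
        · exact absurd h hj0
      case side =>
        intro i hi hik
        rcases lt_or_gt_of_ne hik with hlt | hgt
        · rw [ih i hlt (lt_trans hlt hk)]
          simp
        · have hge : d ≤ i + t := by omega
          rw [hDd j0 _ hge, smul_zero]
  -- Lagrange interpolation: all coefficients of p up to N vanish, contradiction
  have hinj : Set.InjOn (fun m : ℕ => (m : ℂ)) ↑(Finset.range (N + 1)) :=
    fun a _ b _ h => Nat.cast_injective h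
  set q := Lagrange.basis (Finset.range (N + 1)) (fun m : ℕ => (m : ℂ)) N with hq
  have hNs : N ∈ Finset.range (N + 1) := Finset.mem_range.mpr (Nat.lt_succ_self N)
  have hqdeg : q.natDegree = N := by
    rw [hq, Lagrange.natDegree_basis hinj hNs, Finset.card_range]
    omega
  have h1 : ∑ m ∈ Finset.range (N + 1), p.coeff m * q.eval (m : ℂ) = p.coeff N := by
    rw [Finset.sum_eq_single_of_mem N hNs ?side2]
    · rw [hq, Lagrange.eval_basis_self hinj hNs, mul_one]
    case side2 =>
      intro m hm hmN
      rw [hq, Lagrange.eval_basis_of_ne (Ne.symm hmN) hm, mul_zero]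
  have heval : ∀ m ∈ Finset.range (N + 1),
      q.eval (m : ℂ) = ∑ i ∈ Finset.range (N + 1), q.coeff i * (m : ℂ) ^ i := by
    intro m _
    rw [show N + 1 = q.natDegree + 1 by rw [hqdeg]]
    exact Polynomial.eval_eq_sum_range _
  have h2 : ∑ m ∈ Finset.range (N + 1), p.coeff m * q.eval (m : ℂ)
      = ∑ i ∈ Finset.range (N + 1), q.coeff i * c i := by
    calc ∑ m ∈ Finset.range (N + 1), p.coeff m * q.eval (m : ℂ)
        = ∑ m ∈ Finset.range (N + 1), ∑ i ∈ Finset.range (N + 1),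
            p.coeff m * (q.coeff i * (m : ℂ) ^ i) := by
          refine Finset.sum_congr rfl fun m hm => ?_
          rw [heval m hm, Finset.mul_sum]
      _ = ∑ i ∈ Finset.range (N + 1), ∑ m ∈ Finset.range (N + 1),
            p.coeff m * (q.coeff i * (m : ℂ) ^ i) := Finset.sum_comm
      _ = ∑ i ∈ Finset.range (N + 1), q.coeff i * c i := by
          refine Finset.sum_congr rfl fun i _ => ?_
          rw [hcval, Finset.mul_sum]
          exact Finset.sum_congr rfl fun m _ => by ring
  have h3 : ∑ i ∈ Finset.range (N + 1), q.coeff i * c i = 0 :=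
    Finset.sum_eq_zero fun i hi => by
      rw [hc i (by have := Finset.mem_range.mp hi; omega), mul_zero]
  have hN0 : p.coeff N = 0 := by rw [← h1, h2, h3]
  exact hp (Polynomial.leadingCoeff_eq_zero.mp (by rwa [Polynomial.leadingCoeff]))
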